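/- Every covariant causet with more than one element has a unique producer: there is exactly one covariant causet y such that x is obtained from y by adjoining a single maximal element. -/

import Mathlib

/-- A covariant causet: any two elements of different heights are comparable. -/
def CCauset (α : Type) [PartialOrder α] : Prop :=
  ∀ a b : α, Order.height a ≠ Order.height b → (a < b ∨ b < a)

/-- `β` produces `α` (equivalently, `α` is an offspring of `β`): `α` is obtained
from `β` by adjoining a single maximal element, i.e. `α` has a maximal element
whose deletion leaves a poset order isomorphic to `β`. -/
def Produces (β α : Type) [PartialOrder β] [PartialOrder α] : Prop :=
  ∃ a : α, IsMax a ∧ Nonempty (β ≃o {c : α // c ≠ a})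

section aux

variable {α : Type} [PartialOrder α] [Fintype α]

lemma my_height_lt_top (x : α) : Order.height x < ⊤ := by
  have h : Order.height x ≤ (Fintype.card α : ℕ∞) := by
    apply Order.height_le
    intro p _
    have h2 : p.length + 1 ≤ Fintype.card α := by
      simpa using Fintype.card_le_of_injective p.toFun p.strictMono.injective
    exact_mod_cast Nat.le_of_succ_le h2
  exact lt_of_le_of_lt h (ENat.coe_lt_top _)

lemma my_lt_iff (hx : CCauset α) {x y : α} :
    x < y ↔ Order.height x < Order.height y := by
  constructor
  · intro h; exact Order.height_strictMono h (my_height_lt_top x)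
  · intro h
    rcases hx x y (ne_of_lt h) with h' | h'
    · exact h'
    · exact absurd (Order.height_strictMono h' (my_height_lt_top y)) (not_lt.mpr h.le)

lemma my_le_iff (hx : CCauset α) {x y : α} :
    x ≤ y ↔ x = y ∨ Order.height x < Order.height y := by
  rw [le_iff_lt_or_eq, ← my_lt_iff hx, or_comm]

lemma max_height_eq (hx : CCauset α) {a b : α} (ha : IsMax a) (hb : IsMax b) :
    Order.height a = Order.height b := by
  by_contra h
  rcases hx a b h with h' | h'
  · exact absurd (ha h'.le) (not_le_of_gt h')
  · exact absurd (hb h'.le) (not_le_of_gt h')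

/-- Heights are unchanged when removing a maximal element. -/
lemma height_subtype (hx : CCauset α) {a : α} (ha : IsMax a) (c : {x : α // x ≠ a}) :
    Order.height c = Order.height (c : α) := by
  apply le_antisymm
  · exact Order.height_le_height_apply_of_strictMono Subtype.val (fun _ _ h => h) c
  · apply Order.height_le
    intro p hlast
    have hmem : ∀ i, p.toFun i ≠ a := by
      intro i hi
      have : p.toFun i ≤ p.last := p.monotone (Fin.le_last i)
      rw [hlast, hi] at this
      exact c.2 (le_antisymm (ha this) this)
    let q : LTSeries {x : α // x ≠ a} :=
      ⟨p.length, fun i => ⟨p.toFun i, hmem i⟩, fun i => p.step i⟩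
    have hq : q.last = c := Subtype.ext (by simpa [q, RelSeries.last] using hlast)
    calc (p.length : ℕ∞) = q.length := rfl
      _ ≤ Order.height q.last := Order.length_le_height_last
      _ = Order.height c := by rw [hq]

lemma ccauset_subtype (hx : CCauset α) {a : α} (ha : IsMax a) :
    CCauset {x : α // x ≠ a} := by
  intro c d h
  rw [height_subtype hx ha c, height_subtype hx ha d] at h
  rcases hx c d h with h' | h'
  · exact Or.inl h'
  · exact Or.inr h'

lemma swap_le_iff [DecidableEq α] (hx : CCauset α) {a b : α} (ha : IsMax a) (hb : IsMax b)
    (x y : α) : Equiv.swap a b x ≤ Equiv.swap a b y ↔ x ≤ y := by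
  have hh : ∀ x : α, Order.height (Equiv.swap a b x) = Order.height x := by
    intro x
    rcases eq_or_ne x a with rfl | hxa
    · rw [Equiv.swap_apply_left]; exact (max_height_eq hx ha hb).symm
    rcases eq_or_ne x b with rfl | hxb
    · rw [Equiv.swap_apply_right]; exact max_height_eq hx ha hb
    · rw [Equiv.swap_apply_of_ne_of_ne hxa hxb]
  rw [my_le_iff hx, my_le_iff hx, hh, hh, (Equiv.swap a b).injective.eq_iff]

/-- Removing either of two maximal elements gives isomorphic posets. -/
noncomputable def delIso (hx : CCauset α) {a b : α} (ha : IsMax a) (hb : IsMax b) :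
    {c : α // c ≠ a} ≃o {c : α // c ≠ b} := by
  letI := Classical.decEq α
  refine ⟨Equiv.subtypeEquiv (Equiv.swap a b) ?_, ?_⟩
  · intro c
    rw [not_iff_not]
    constructor
    · intro h'
      rw [h', Equiv.swap_apply_left]
    · intro h'
      have := Equiv.swap_apply_left a b
      exact (Equiv.swap a b).injective (by rw [h', this])
  · intro c d
    show ((Equiv.swap a b c.1 : α) ≤ Equiv.swap a b d.1) ↔ ((c.1 : α) ≤ d.1)
    exact swap_le_iff hx ha hb c.1 d.1

end aux

/-- Every covariant causet with more than one element has a unique producer: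
there exists a covariant causet producing it, and any two covariant producers
are order isomorphic. -/
theorem unique_producer (α : Type) [PartialOrder α] [Fintype α]
    (hx : CCauset α) (h1 : 1 < Fintype.card α) :
    (∃ (β : Type) (i1 : PartialOrder β) (i2 : Fintype β),
        @CCauset β i1 ∧ @Produces β α i1 _) ∧
    (∀ (β γ : Type) (i1 : PartialOrder β) (i3 : PartialOrder γ),
        @CCauset β i1 → @CCauset γ i3 → @Produces β α i1 _ → @Produces γ α i3 _ →
          ∃ e : β ≃ γ, ∀ a b : β, i1.le a b ↔ i3.le (e a) (e b)) := by
  constructor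
  · -- existence
    haveI hne : Nonempty α := Fintype.card_pos_iff.mp (by omega)
    obtain ⟨a, -, hmax⟩ := Set.Finite.exists_maximalFor (id : α → α) (Set.univ : Set α) (Set.toFinite _)
      Set.univ_nonempty
    have ha : IsMax a := fun c hc => hmax (Set.mem_univ c) hc
    refine ⟨{c : α // c ≠ a}, inferInstance, Fintype.ofFinite {c : α // c ≠ a},
      ccauset_subtype hx ha, a, ha, ⟨OrderIso.refl _⟩⟩
  · -- uniqueness
    rintro β γ i1 i3 hβ hγ ⟨a, ha, ⟨f⟩⟩ ⟨b, hb, ⟨g⟩⟩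
    refine ⟨(f.trans ((delIso hx ha hb).trans g.symm)).toEquiv, ?_⟩
    intro x y
    exact (f.trans ((delIso hx ha hb).trans g.symm)).le_iff_le.symm
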